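/- Let m : ℝ → [0,1] be a function with m = 1 on [0, 3/4] and supp m ⊆ [0,1), and let m_λ denote its Gaussian regularization at scale λ. Then there exist C, c > 0 such that for all ε, τ, λ, μ > 0 and all ξ ∈ ℝ, |e^{-ε|ξ|²/(2τ)} (1 - m_λ(|ξ|/μ))| ≤ e^{-εμ²/(8τ)} + C e^{-cλ}. -/

import Mathlib

open MeasureTheory Set

/-- Gaussian regularization (at scale `λ`) of the radial (even) extension of `m : ℝ → ℝ`:
`m_λ(s) = (λ/(4π))^{1/2} ∫ m(|y|) e^{-λ(s-y)²/4} dy`. -/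
noncomputable def rreg (m : ℝ → ℝ) (lam s : ℝ) : ℝ :=
  Real.sqrt (lam / (4 * Real.pi)) * ∫ y : ℝ, m (|y|) * Real.exp (-lam * (s - y) ^ 2 / 4)

private lemma gauss_integrable' (b s : ℝ) (hb : 0 < b) :
    Integrable fun y : ℝ => Real.exp (-b * (s - y) ^ 2) := by
  have h : ∀ y : ℝ, -b * (s - y) ^ 2 = -b * (y - s) ^ 2 := fun y => by ring
  simp_rw [h]
  exact (integrable_exp_neg_mul_sq hb).comp_sub_right s

private lemma gauss_int' (b s : ℝ) (hb : 0 < b) :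
    ∫ y : ℝ, Real.exp (-b * (s - y) ^ 2) = Real.sqrt (Real.pi / b) := by
  have h : ∀ y : ℝ, -b * (s - y) ^ 2 = -b * (y - s) ^ 2 := fun y => by ring
  simp_rw [h]
  rw [MeasureTheory.integral_sub_right_eq_self (fun y => Real.exp (-b * y ^ 2)) s,
    integral_gaussian]

private lemma gauss_integrable (lam s : ℝ) (hl : 0 < lam) :
    Integrable fun y : ℝ => Real.exp (-lam * (s - y) ^ 2 / 4) := by
  have h : ∀ y : ℝ, -lam * (s - y) ^ 2 / 4 = -(lam / 4) * (s - y) ^ 2 := fun y => by ring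
  simp_rw [h]
  exact gauss_integrable' _ s (by positivity)

private lemma gauss_int (lam s : ℝ) (hl : 0 < lam) :
    ∫ y : ℝ, Real.exp (-lam * (s - y) ^ 2 / 4) = Real.sqrt (4 * Real.pi / lam) := by
  have h : ∀ y : ℝ, -lam * (s - y) ^ 2 / 4 = -(lam / 4) * (s - y) ^ 2 := fun y => by ring
  simp_rw [h]
  rw [gauss_int' _ s (by positivity)]
  congr 1
  field_simp

private lemma mg_integrable (m : ℝ → ℝ) (hmeas : Measurable m)
    (hrange : ∀ s, m s ∈ Icc (0 : ℝ) 1) (lam s : ℝ) (hl : 0 < lam) :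
    Integrable fun y : ℝ => m (|y|) * Real.exp (-lam * (s - y) ^ 2 / 4) := by
  apply (gauss_integrable lam s hl).mono'
  · exact ((hmeas.comp measurable_abs).mul (by fun_prop)).aestronglyMeasurable
  · filter_upwards with y
    rw [Real.norm_eq_abs, abs_mul, abs_of_nonneg (hrange _).1,
      abs_of_nonneg (Real.exp_pos _).le]
    exact mul_le_of_le_one_left (Real.exp_pos _).le (hrange _).2

private lemma sqrt_prod (lam : ℝ) (hl : 0 < lam) :
    Real.sqrt (lam / (4 * Real.pi)) * Real.sqrt (4 * Real.pi / lam) = 1 := by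
  have hp := Real.pi_pos
  rw [← Real.sqrt_mul (by positivity),
    show lam / (4 * Real.pi) * (4 * Real.pi / lam) = 1 by field_simp, Real.sqrt_one]

private lemma rreg_nonneg (m : ℝ → ℝ) (hrange : ∀ s, m s ∈ Icc (0 : ℝ) 1) (lam s : ℝ) :
    0 ≤ rreg m lam s := by
  apply mul_nonneg (Real.sqrt_nonneg _)
  exact integral_nonneg fun y => mul_nonneg (hrange _).1 (Real.exp_pos _).le

private lemma rreg_le_one (m : ℝ → ℝ) (hmeas : Measurable m)
    (hrange : ∀ s, m s ∈ Icc (0 : ℝ) 1) (lam s : ℝ) (hl : 0 < lam) :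
    rreg m lam s ≤ 1 := by
  have h : (∫ y : ℝ, m (|y|) * Real.exp (-lam * (s - y) ^ 2 / 4)) ≤
      ∫ y : ℝ, Real.exp (-lam * (s - y) ^ 2 / 4) := by
    refine integral_mono (mg_integrable m hmeas hrange lam s hl) (gauss_integrable lam s hl)
      fun y => mul_le_of_le_one_left (Real.exp_pos _).le (hrange _).2
  calc rreg m lam s ≤ Real.sqrt (lam / (4 * Real.pi)) * Real.sqrt (4 * Real.pi / lam) := by
        rw [← gauss_int lam s hl]
        exact mul_le_mul_of_nonneg_left h (Real.sqrt_nonneg _)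
    _ = 1 := sqrt_prod lam hl

private lemma key_decay (m : ℝ → ℝ) (hmeas : Measurable m)
    (hrange : ∀ s, m s ∈ Icc (0 : ℝ) 1)
    (hone : ∀ s ∈ Icc (0 : ℝ) (3 / 4), m s = 1)
    (lam s : ℝ) (hl : 0 < lam) (hs0 : 0 ≤ s) (hs : s ≤ 1 / 2) :
    1 - rreg m lam s ≤ 2 * Real.exp (-lam / 128) := by
  have hp := Real.pi_pos
  have hint1 := gauss_integrable lam s hl
  have hint2 := mg_integrable m hmeas hrange lam s hl
  have e1 : 1 - rreg m lam s =
      Real.sqrt (lam / (4 * Real.pi)) *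
        ∫ y : ℝ, (1 - m (|y|)) * Real.exp (-lam * (s - y) ^ 2 / 4) := by
    simp_rw [sub_mul, one_mul]
    rw [integral_sub hint1 hint2, mul_sub, gauss_int lam s hl, sqrt_prod lam hl, rreg]
  -- pointwise bound
  have hpt : ∀ y : ℝ, (1 - m (|y|)) * Real.exp (-lam * (s - y) ^ 2 / 4) ≤
      Real.exp (-lam / 128) * Real.exp (-(lam / 8) * (s - y) ^ 2) := by
    intro y
    rcases le_or_gt (|y|) (3 / 4) with hy | hy
    · rw [hone (|y|) ⟨abs_nonneg _, hy⟩]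
      simp [mul_nonneg (Real.exp_pos _).le (Real.exp_pos _).le]
    · have h1 : (1 : ℝ) / 4 ≤ |s - y| := by
        have : |y| - |s| ≤ |s - y| := by
          rw [abs_sub_comm]; exact abs_sub_abs_le_abs_sub y s
        rw [abs_of_nonneg hs0] at this
        linarith
      have h2 : (1 : ℝ) / 16 ≤ (s - y) ^ 2 := by
        have := sq_abs (s - y)
        nlinarith [sq_nonneg (|s - y| - 1 / 4)]
      have h3 : Real.exp (-lam * (s - y) ^ 2 / 4) ≤
          Real.exp (-lam / 128) * Real.exp (-(lam / 8) * (s - y) ^ 2) := by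
        rw [← Real.exp_add]
        apply Real.exp_le_exp.2
        nlinarith
      calc (1 - m (|y|)) * Real.exp (-lam * (s - y) ^ 2 / 4)
          ≤ 1 * Real.exp (-lam * (s - y) ^ 2 / 4) := by
            apply mul_le_mul_of_nonneg_right _ (Real.exp_pos _).le
            linarith [(hrange (|y|)).1]
        _ = Real.exp (-lam * (s - y) ^ 2 / 4) := one_mul _
        _ ≤ _ := h3
  have hintR : Integrable fun y : ℝ =>
      Real.exp (-lam / 128) * Real.exp (-(lam / 8) * (s - y) ^ 2) :=
    (gauss_integrable' (lam / 8) s (by positivity)).const_mul _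
  have hintL : Integrable fun y : ℝ =>
      (1 - m (|y|)) * Real.exp (-lam * (s - y) ^ 2 / 4) := by
    simp_rw [sub_mul, one_mul]
    exact hint1.sub hint2
  have hI : (∫ y : ℝ, (1 - m (|y|)) * Real.exp (-lam * (s - y) ^ 2 / 4)) ≤
      Real.exp (-lam / 128) * Real.sqrt (Real.pi / (lam / 8)) := by
    calc _ ≤ ∫ y : ℝ, Real.exp (-lam / 128) * Real.exp (-(lam / 8) * (s - y) ^ 2) :=
          integral_mono hintL hintR hpt
      _ = Real.exp (-lam / 128) * Real.sqrt (Real.pi / (lam / 8)) := by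
          rw [integral_const_mul, gauss_int' _ s (by positivity)]
  rw [e1]
  have hsq : Real.sqrt (lam / (4 * Real.pi)) * Real.sqrt (Real.pi / (lam / 8)) ≤ 2 := by
    rw [← Real.sqrt_mul (by positivity),
      show lam / (4 * Real.pi) * (Real.pi / (lam / 8)) = 2 by field_simp; ring]
    calc Real.sqrt 2 ≤ Real.sqrt 4 := Real.sqrt_le_sqrt (by norm_num)
      _ = 2 := by rw [show (4 : ℝ) = 2 ^ 2 by norm_num, Real.sqrt_sq (by norm_num)]
  calc Real.sqrt (lam / (4 * Real.pi)) *
        ∫ y : ℝ, (1 - m (|y|)) * Real.exp (-lam * (s - y) ^ 2 / 4)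
      ≤ Real.sqrt (lam / (4 * Real.pi)) *
        (Real.exp (-lam / 128) * Real.sqrt (Real.pi / (lam / 8))) :=
        mul_le_mul_of_nonneg_left hI (Real.sqrt_nonneg _)
    _ = Real.sqrt (lam / (4 * Real.pi)) * Real.sqrt (Real.pi / (lam / 8)) *
        Real.exp (-lam / 128) := by ring
    _ ≤ 2 * Real.exp (-lam / 128) :=
        mul_le_mul_of_nonneg_right hsq (Real.exp_pos _).le

/-- Let `m : ℝ → [0,1]` (radial) with `m = 1` on `[0, 3/4]` and `supp m ⊆ [0,1)`.
Then there exist `C, c > 0` such that for all `ε, τ, λ, μ > 0` and all `ξ ∈ ℝ`,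
`|e^{-ε|ξ|²/(2τ)} (1 - m_λ(|ξ|/μ))| ≤ e^{-εμ²/(8τ)} + C e^{-cλ}`. -/
theorem heat_multiplier_highfreq (m : ℝ → ℝ) (hmeas : Measurable m)
    (hrange : ∀ s, m s ∈ Icc (0 : ℝ) 1)
    (hone : ∀ s ∈ Icc (0 : ℝ) (3 / 4), m s = 1)
    (hsupp : ∀ s, m s ≠ 0 → s ∈ Ico (0 : ℝ) 1) :
    ∃ C c : ℝ, 0 < C ∧ 0 < c ∧
      ∀ ε τ lam μ : ℝ, 0 < ε → 0 < τ → 0 < lam → 0 < μ → ∀ ξ : ℝ,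
        |Real.exp (-ε * ξ ^ 2 / (2 * τ)) * (1 - rreg m lam (|ξ| / μ))| ≤
          Real.exp (-ε * μ ^ 2 / (8 * τ)) + C * Real.exp (-c * lam) := by
  refine ⟨2, 1 / 128, by norm_num, by norm_num, ?_⟩
  intro ε τ lam μ hε hτ hl hμ ξ
  set s := |ξ| / μ with hsdef
  have hs0 : 0 ≤ s := div_nonneg (abs_nonneg _) hμ.le
  have hr0 := rreg_nonneg m hrange lam s
  have hr1 := rreg_le_one m hmeas hrange lam s hl
  rw [abs_mul, abs_of_nonneg (Real.exp_pos _).le]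
  rcases le_or_gt (|ξ|) (μ / 2) with h | h
  · -- low frequency: use Gaussian decay of the regularization
    have hs : s ≤ 1 / 2 := by
      rw [hsdef, div_le_iff₀ hμ]; linarith
    have hkey := key_decay m hmeas hrange hone lam s hl hs0 hs
    have habs : |1 - rreg m lam s| = 1 - rreg m lam s := abs_of_nonneg (by linarith)
    rw [habs]
    have hexp1 : Real.exp (-ε * ξ ^ 2 / (2 * τ)) ≤ 1 := by
      apply Real.exp_le_one_iff.2
      have : 0 ≤ ξ ^ 2 := sq_nonneg _
      have h2τ : 0 < 2 * τ := by linarith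
      apply div_nonpos_of_nonpos_of_nonneg _ h2τ.le
      nlinarith
    calc Real.exp (-ε * ξ ^ 2 / (2 * τ)) * (1 - rreg m lam s)
        ≤ 1 * (2 * Real.exp (-lam / 128)) := by
          apply mul_le_mul hexp1 hkey (by linarith) (by norm_num)
      _ = 2 * Real.exp (-(1 / 128) * lam) := by rw [one_mul]; ring_nf
      _ ≤ Real.exp (-ε * μ ^ 2 / (8 * τ)) + 2 * Real.exp (-(1 / 128) * lam) := by
          linarith [Real.exp_pos (-ε * μ ^ 2 / (8 * τ))]
  · -- high frequency: the heat factor is small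
    have hξ2 : μ ^ 2 / 4 ≤ ξ ^ 2 := by
      have := sq_abs ξ
      nlinarith
    have hexp : Real.exp (-ε * ξ ^ 2 / (2 * τ)) ≤ Real.exp (-ε * μ ^ 2 / (8 * τ)) := by
      apply Real.exp_le_exp.2
      rw [div_le_div_iff₀ (by linarith) (by linarith)]
      nlinarith [mul_le_mul_of_nonneg_left hξ2 (mul_pos hε hτ).le]
    have habs : |1 - rreg m lam s| ≤ 1 := by
      rw [abs_le]; constructor <;> linarith
    calc Real.exp (-ε * ξ ^ 2 / (2 * τ)) * |1 - rreg m lam s|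
        ≤ Real.exp (-ε * μ ^ 2 / (8 * τ)) * 1 :=
          mul_le_mul hexp habs (abs_nonneg _) (Real.exp_pos _).le
      _ = Real.exp (-ε * μ ^ 2 / (8 * τ)) := mul_one _
      _ ≤ _ := by
          have := Real.exp_pos (-(1 / 128) * lam)
          linarith
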